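/- Let N = (V, E, c) be a nesting balanced network with boundary vertices ∂V ⊆ V, and let I, J, K ⊆ ∂V be pairwise disjoint. Then the cycle-flow entropy satisfies strong subadditivity: S(I ∪ K) + S(J ∪ K) ≥ S(K) + S(I ∪ J ∪ K). -/

import Mathlib

open scoped Classical

/-- An edge cycle: a nonempty cyclically ordered sequence of distinct directed
edges (each a source-target pair) with the target of each edge equal to the
source of the next (cyclically). -/
structure EdgeCycle (V : Type*) where
  n : ℕ
  npos : 0 < n
  edge : Fin n → V × V
  inj : Function.Injective edge
  chain : ∀ i : Fin n, (edge i).2 = (edge ⟨(i.val + 1) % n, Nat.mod_lt _ npos⟩).1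

/-- Membership of a directed edge in an edge cycle. -/
def EdgeCycle.Mem {V : Type*} (C : EdgeCycle V) (e : V × V) : Prop :=
  ∃ i, C.edge i = e

/-- The cycle visits a vertex of `S`: some edge of the cycle has its target in `S`. -/
def EdgeCycle.Visits {V : Type*} (C : EdgeCycle V) (S : Finset V) : Prop :=
  ∃ i, (C.edge i).2 ∈ S

/-- A simple cycle flow: an edge cycle together with a nonnegative flux. -/
structure CycleFlow (V : Type*) where
  cyc : EdgeCycle V
  flux : ℝ
  flux_nonneg : 0 ≤ flux

/-- The total load that a finite family of simple cycle flows places on the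
directed edge `(u, v)`. -/
noncomputable def edgeLoad {V : Type*} (F : List (CycleFlow V)) (u v : V) : ℝ :=
  (F.map (fun C => if C.cyc.Mem (u, v) then C.flux else 0)).sum

/-- A finite family of simple cycle flows is a multi-cycle flow on the network
with capacity function `c` if on every edge the total load is at most the capacity. -/
def Feasible {V : Type*} (c : V → V → ℝ) (F : List (CycleFlow V)) : Prop :=
  ∀ u v, edgeLoad F u v ≤ c u v

/-- The flux of a multi-cycle flow between two (disjoint) vertex sets `I` and `J`:
the sum of the fluxes of those simple cycle flows visiting both a vertex of `I`
and a vertex of `J`. -/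
noncomputable def mflux {V : Type*} (F : List (CycleFlow V)) (I J : Finset V) : ℝ :=
  (F.map (fun C => if C.cyc.Visits I ∧ C.cyc.Visits J then C.flux else 0)).sum

/-- The cycle-flow entropy of a subset `I` of the boundary vertices `bdry`:
the maximal flux between `I` and its boundary complement over all
multi-cycle flows. -/
noncomputable def entropy {V : Type*} (c : V → V → ℝ) (bdry I : Finset V) : ℝ :=
  sSup { x | ∃ F : List (CycleFlow V), Feasible c F ∧ mflux F I (bdry \ I) = x }

/-- A network is balanced if at every vertex the total capacity of ingoing edges
equals the total capacity of outgoing edges. -/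
def BalancedNet {V : Type*} [Fintype V] (c : V → V → ℝ) : Prop :=
  ∀ v : V, (∑ u, c u v) = ∑ u, c v u

/-- The residual capacity function of a network `c` with respect to a
multi-cycle flow `F`. -/
noncomputable def resid {V : Type*} (c : V → V → ℝ) (F : List (CycleFlow V)) : V → V → ℝ :=
  fun u v => c u v - edgeLoad F u v

/-- `F'` is a multi-cycle subflow of `F`: same edge cycles, smaller fluxes. -/
def Subflow {V : Type*} (F' F : List (CycleFlow V)) : Prop :=
  List.Forall₂ (fun C' C => C'.cyc = C.cyc ∧ C'.flux ≤ C.flux) F' F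

/-- The nesting property: for every pair of disjoint boundary subsets `I`, `J`
there is a single multi-cycle flow simultaneously maximizing the flux through
`I` and through `I ∪ J`. -/
def Nesting {V : Type*} (c : V → V → ℝ) (bdry : Finset V) : Prop :=
  ∀ I J : Finset V, I ⊆ bdry → J ⊆ bdry → Disjoint I J →
    ∃ F : List (CycleFlow V), Feasible c F ∧
      mflux F I (bdry \ I) = entropy c bdry I ∧
      mflux F (I ∪ J) (bdry \ (I ∪ J)) = entropy c bdry (I ∪ J)

section Aux

variable {V : Type*}

lemma mflux_le_sum_flux (F : List (CycleFlow V)) (I J : Finset V) :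
    mflux F I J ≤ (F.map (·.flux)).sum := by
  unfold mflux
  induction F with
  | nil => simp
  | cons C F ih =>
    simp only [List.map_cons, List.sum_cons]
    have h : (if C.cyc.Visits I ∧ C.cyc.Visits J then C.flux else 0) ≤ C.flux := by
      split
      · exact le_rfl
      · exact C.flux_nonneg
    linarith

lemma edgeLoad_cons (C : CycleFlow V) (F : List (CycleFlow V)) (u v : V) :
    edgeLoad (C :: F) u v
      = (if C.cyc.Mem (u, v) then C.flux else 0) + edgeLoad F u v := by
  simp [edgeLoad]

lemma sum_flux_le_sum_load [Fintype V] (F : List (CycleFlow V)) :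
    (F.map (·.flux)).sum ≤ ∑ u, ∑ v, edgeLoad F u v := by
  induction F with
  | nil => simp [edgeLoad]
  | cons C F ih =>
    simp only [List.map_cons, List.sum_cons, edgeLoad_cons, Finset.sum_add_distrib]
    have hC : C.flux ≤ ∑ u, ∑ v, (if C.cyc.Mem (u, v) then C.flux else 0) := by
      set e := C.cyc.edge ⟨0, C.cyc.npos⟩ with he
      have hmem : C.cyc.Mem (e.1, e.2) := ⟨⟨0, C.cyc.npos⟩, by simp [he]⟩
      have h1 : C.flux ≤ ∑ v, (if C.cyc.Mem (e.1, v) then C.flux else 0) := by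
        have := Finset.single_le_sum
          (f := fun v => if C.cyc.Mem (e.1, v) then C.flux else 0)
          (fun v _ => by split; exacts [C.flux_nonneg, le_rfl]) (Finset.mem_univ e.2)
        simpa [hmem] using this
      refine h1.trans ?_
      exact Finset.single_le_sum
        (f := fun u => ∑ v, (if C.cyc.Mem (u, v) then C.flux else 0))
        (fun u _ => Finset.sum_nonneg fun v _ => by
          split
          · exact C.flux_nonneg
          · exact le_rfl) (Finset.mem_univ e.1)
    linarith

lemma entropy_bddAbove [Fintype V] (c : V → V → ℝ) (bdry I : Finset V) :
    BddAbove { x | ∃ F : List (CycleFlow V), Feasible c F ∧ mflux F I (bdry \ I) = x } := by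
  refine ⟨∑ u, ∑ v, c u v, ?_⟩
  rintro x ⟨F, hF, rfl⟩
  refine (mflux_le_sum_flux F _ _).trans ((sum_flux_le_sum_load F).trans ?_)
  exact Finset.sum_le_sum fun u _ => Finset.sum_le_sum fun v _ => hF u v

lemma le_entropy [Fintype V] (c : V → V → ℝ) (bdry I : Finset V)
    (F : List (CycleFlow V)) (hF : Feasible c F) :
    mflux F I (bdry \ I) ≤ entropy c bdry I :=
  le_csSup (entropy_bddAbove c bdry I) ⟨F, hF, rfl⟩

lemma mflux_congr (F : List (CycleFlow V)) {A A' B B' : Finset V}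
    (hA : ∀ x, x ∈ A ↔ x ∈ A') (hB : ∀ x, x ∈ B ↔ x ∈ B') :
    mflux F A B = mflux F A' B' := by
  rw [Finset.ext hA, Finset.ext hB]

lemma entropy_congr (c : V → V → ℝ) (bdry : Finset V) {A B : Finset V}
    (h : ∀ x, x ∈ A ↔ x ∈ B) : entropy c bdry A = entropy c bdry B := by
  rw [Finset.ext h]

lemma visits_union [DecidableEq V] (C : EdgeCycle V) (A B : Finset V) :
    C.Visits (A ∪ B) ↔ C.Visits A ∨ C.Visits B := by
  constructor
  · rintro ⟨i, hi⟩
    rcases Finset.mem_union.1 hi with h | h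
    · exact Or.inl ⟨i, h⟩
    · exact Or.inr ⟨i, h⟩
  · rintro (⟨i, h⟩ | ⟨i, h⟩) <;>
      exact ⟨i, Finset.mem_union.2 (by tauto)⟩

/-- The key summed (per-cycle) inequality. -/
lemma mflux_ssa [DecidableEq V] (F : List (CycleFlow V)) (I J K O : Finset V) :
    mflux F K (I ∪ J ∪ O) + mflux F (I ∪ J ∪ K) O ≤
      mflux F (I ∪ K) (J ∪ O) + mflux F (J ∪ K) (I ∪ O) := by
  unfold mflux
  induction F with
  | nil => simp
  | cons C F ih =>
    simp only [List.map_cons, List.sum_cons]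
    have hkey :
        (if C.cyc.Visits K ∧ C.cyc.Visits (I ∪ J ∪ O) then C.flux else 0) +
          (if C.cyc.Visits (I ∪ J ∪ K) ∧ C.cyc.Visits O then C.flux else 0) ≤
        (if C.cyc.Visits (I ∪ K) ∧ C.cyc.Visits (J ∪ O) then C.flux else 0) +
          (if C.cyc.Visits (J ∪ K) ∧ C.cyc.Visits (I ∪ O) then C.flux else 0) := by
      have hf := C.flux_nonneg
      simp only [visits_union]
      split_ifs <;> first | linarith | (exfalso; tauto)
    linarith

end Aux

/-- Strong subadditivity of the cycle-flow entropy on a nesting balanced network. -/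
theorem stmt7 {V : Type*} [Fintype V] [DecidableEq V] (c : V → V → ℝ)
    (hc : ∀ u v, 0 ≤ c u v) (bdry : Finset V) (hbal : BalancedNet c)
    (hnest : Nesting c bdry) (I J K : Finset V)
    (hI : I ⊆ bdry) (hJ : J ⊆ bdry) (hK : K ⊆ bdry)
    (hIJ : Disjoint I J) (hIK : Disjoint I K) (hJK : Disjoint J K) :
    entropy c bdry K + entropy c bdry (I ∪ J ∪ K) ≤
      entropy c bdry (I ∪ K) + entropy c bdry (J ∪ K) := by
  classical
  set O : Finset V := bdry \ (I ∪ J ∪ K) with hO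
  have hIJ' := Finset.disjoint_left.1 hIJ
  have hIK' := Finset.disjoint_left.1 hIK
  have hJK' := Finset.disjoint_left.1 hJK
  have hA : bdry \ K = I ∪ J ∪ O := by
    ext x
    simp only [hO, Finset.mem_sdiff, Finset.mem_union]
    constructor
    · rintro ⟨hx, hxK⟩
      by_cases hxI : x ∈ I
      · tauto
      · by_cases hxJ : x ∈ J <;> tauto
    · rintro ((hx | hx) | ⟨hx, hx'⟩)
      · exact ⟨hI hx, fun h => hIK' hx h⟩
      · exact ⟨hJ hx, fun h => hJK' hx h⟩
      · tauto
  have hC : bdry \ (I ∪ K) = J ∪ O := by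
    ext x
    simp only [hO, Finset.mem_sdiff, Finset.mem_union]
    constructor
    · rintro ⟨hx, hxIK⟩
      by_cases hxJ : x ∈ J <;> tauto
    · rintro (hx | ⟨hx, hx'⟩)
      · exact ⟨hJ hx, fun h => h.elim (fun h' => hIJ' h' hx) (fun h' => hJK' hx h')⟩
      · tauto
  have hD : bdry \ (J ∪ K) = I ∪ O := by
    ext x
    simp only [hO, Finset.mem_sdiff, Finset.mem_union]
    constructor
    · rintro ⟨hx, hxJK⟩
      by_cases hxI : x ∈ I <;> tauto
    · rintro (hx | ⟨hx, hx'⟩)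
      · exact ⟨hI hx, fun h => h.elim (fun h' => hIJ' hx h') (fun h' => hIK' hx h')⟩
      · tauto
  have hdisj : Disjoint K (I ∪ J) := by
    rw [Finset.disjoint_union_right]
    exact ⟨hIK.symm, hJK.symm⟩
  obtain ⟨F, hF, h1, h2⟩ := hnest K (I ∪ J) hK (Finset.union_subset hI hJ) hdisj
  have h1' : mflux F K (I ∪ J ∪ O) = entropy c bdry K := by
    refine Eq.trans (mflux_congr F (fun _ => Iff.rfl) ?_) h1
    intro x
    rw [← hA]
    simp [Finset.mem_sdiff]
  have h2' : mflux F (I ∪ J ∪ K) O = entropy c bdry (I ∪ J ∪ K) := by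
    refine Eq.trans (mflux_congr F ?_ ?_) (Eq.trans h2 (entropy_congr c bdry ?_))
    · intro x
      simp only [Finset.mem_union]
      tauto
    · intro x
      simp only [hO, Finset.mem_sdiff, Finset.mem_union]
      tauto
    · intro x
      simp only [Finset.mem_union]
      tauto
  have hle1 : mflux F (I ∪ K) (J ∪ O) ≤ entropy c bdry (I ∪ K) := by
    refine le_of_eq_of_le (mflux_congr F (fun _ => Iff.rfl) ?_)
      (le_entropy c bdry (I ∪ K) F hF)
    intro x
    rw [← hC]
    simp [Finset.mem_sdiff]
  have hle2 : mflux F (J ∪ K) (I ∪ O) ≤ entropy c bdry (J ∪ K) := by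
    refine le_of_eq_of_le (mflux_congr F (fun _ => Iff.rfl) ?_)
      (le_entropy c bdry (J ∪ K) F hF)
    intro x
    rw [← hD]
    simp [Finset.mem_sdiff]
  calc entropy c bdry K + entropy c bdry (I ∪ J ∪ K)
      = mflux F K (I ∪ J ∪ O) + mflux F (I ∪ J ∪ K) O := by rw [h1', h2']
    _ ≤ mflux F (I ∪ K) (J ∪ O) + mflux F (J ∪ K) (I ∪ O) := mflux_ssa F I J K O
    _ ≤ entropy c bdry (I ∪ K) + entropy c bdry (J ∪ K) := add_le_add hle1 hle2
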